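/- The girth of G(V) is 3, i.e., the length of a shortest cycle in G(V) equals 3. -/

import Mathlib

open Module

/-- The subspace sum graph of a vector space `V` over a field `K`. -/
def subspaceSumGraph (K V : Type*) [Field K] [AddCommGroup V] [Module K V] :
    SimpleGraph {W : Submodule K V // W ≠ ⊥ ∧ W ≠ ⊤} where
  Adj W₁ W₂ := W₁ ≠ W₂ ∧ (W₁ : Submodule K V) ⊔ (W₂ : Submodule K V) = ⊤
  symm := by
    constructor
    intro a b h
    exact ⟨h.1.symm, by rw [sup_comm]; exact h.2⟩
  loopless := by
    constructor
    intro a h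
    exact h.1 rfl

lemma coatom_sup_eq_top {α : Type*} [Lattice α] [OrderTop α] {a b : α}
    (ha : IsCoatom a) (hb : IsCoatom b) (hab : a ≠ b) : a ⊔ b = ⊤ := by
  rcases lt_or_eq_of_le (le_sup_left : a ≤ a ⊔ b) with h | h
  · exact ha.2 _ h
  · exfalso
    have hba : b ≤ a := by rw [h]; exact le_sup_right
    rcases lt_or_eq_of_le hba with h' | h'
    · exact ha.1 (hb.2 _ h')
    · exact hab h'.symm

/-- The girth of `G(V)` (the length of a shortest cycle) equals `3`. -/
theorem subspaceSumGraph_girth (K V : Type*) [Field K] [AddCommGroup V]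
    [Module K V] [FiniteDimensional K V] (hdim : 1 < finrank K V) :
    (subspaceSumGraph K V).girth = 3 := by
  classical
  set G := subspaceSumGraph K V with hG
  -- construct three distinct hyperplanes as kernels of functionals
  obtain b := finBasis K V
  have h0 : (0 : ℕ) < finrank K V := by omega
  have h1 : (1 : ℕ) < finrank K V := hdim
  set i0 : Fin (finrank K V) := ⟨0, h0⟩
  set i1 : Fin (finrank K V) := ⟨1, h1⟩
  have hi01 : i0 ≠ i1 := by simp [i0, i1, Fin.ext_iff]
  set f : V →ₗ[K] K := b.coord i0 with hf
  set g : V →ₗ[K] K := b.coord i1 with hg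
  have hfb0 : f (b i0) = 1 := by simp [hf]
  have hfb1 : f (b i1) = 0 := by simp [hf, Basis.coord_apply, Basis.repr_self_apply, hi01.symm]
  have hgb0 : g (b i0) = 0 := by simp [hg, Basis.coord_apply, Basis.repr_self_apply, hi01]
  have hgb1 : g (b i1) = 1 := by simp [hg]
  have surj : ∀ (l : V →ₗ[K] K) (x : V), l x = 1 → Function.Surjective l := by
    intro l x hx a
    exact ⟨a • x, by simp [hx]⟩
  have hcf : IsCoatom (LinearMap.ker f) :=
    LinearMap.isCoatom_ker_of_surjective (surj f (b i0) hfb0)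
  have hcg : IsCoatom (LinearMap.ker g) :=
    LinearMap.isCoatom_ker_of_surjective (surj g (b i1) hgb1)
  have hfg0 : (f + g) (b i0) = 1 := by simp [hfb0, hgb0]
  have hcfg : IsCoatom (LinearMap.ker (f + g)) :=
    LinearMap.isCoatom_ker_of_surjective (surj (f + g) (b i0) hfg0)
  -- nontriviality of the kernels
  have hbne : ∀ i : Fin (finrank K V), b i ≠ 0 := fun i => b.ne_zero i
  have hb01 : b i0 - b i1 ≠ 0 := sub_ne_zero.mpr (fun h => hi01 (b.injective h))
  have ker_ne_bot_top : ∀ (l : V →ₗ[K] K) (x y : V), x ≠ 0 → l x = 0 → l y = 1 →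
      LinearMap.ker l ≠ ⊥ ∧ LinearMap.ker l ≠ ⊤ := by
    intro l x y hx hlx hly
    constructor
    · intro h
      have : x ∈ LinearMap.ker l := by simp [LinearMap.mem_ker, hlx]
      rw [h] at this
      exact hx (by simpa using this)
    · intro h
      have : y ∈ LinearMap.ker l := h ▸ Submodule.mem_top
      rw [LinearMap.mem_ker, hly] at this
      exact one_ne_zero this
  have hWf := ker_ne_bot_top f (b i1) (b i0) (hbne i1) hfb1 hfb0
  have hWg := ker_ne_bot_top g (b i0) (b i1) (hbne i0) hgb0 hgb1
  have hWfg := ker_ne_bot_top (f + g) (b i0 - b i1) (b i0) hb01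
    (by simp [hfb0, hfb1, hgb0, hgb1]) hfg0
  set v1 : {W : Submodule K V // W ≠ ⊥ ∧ W ≠ ⊤} := ⟨LinearMap.ker f, hWf⟩
  set v2 : {W : Submodule K V // W ≠ ⊥ ∧ W ≠ ⊤} := ⟨LinearMap.ker g, hWg⟩
  set v3 : {W : Submodule K V // W ≠ ⊥ ∧ W ≠ ⊤} := ⟨LinearMap.ker (f + g), hWfg⟩
  -- distinctness
  have hne12 : LinearMap.ker f ≠ LinearMap.ker g := by
    intro h
    have : b i0 ∈ LinearMap.ker f := by rw [h]; simp [LinearMap.mem_ker, hgb0]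
    rw [LinearMap.mem_ker, hfb0] at this
    exact one_ne_zero this
  have hne13 : LinearMap.ker f ≠ LinearMap.ker (f + g) := by
    intro h
    have : b i1 ∈ LinearMap.ker (f + g) := by rw [← h]; simp [LinearMap.mem_ker, hfb1]
    rw [LinearMap.mem_ker] at this
    simp [hfb1, hgb1] at this
  have hne23 : LinearMap.ker g ≠ LinearMap.ker (f + g) := by
    intro h
    have : b i0 ∈ LinearMap.ker (f + g) := by rw [← h]; simp [LinearMap.mem_ker, hgb0]
    rw [LinearMap.mem_ker, hfg0] at this
    exact one_ne_zero this
  have a12 : G.Adj v1 v2 :=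
    ⟨fun h => hne12 (congrArg Subtype.val h), coatom_sup_eq_top hcf hcg hne12⟩
  have a23 : G.Adj v2 v3 :=
    ⟨fun h => hne23 (congrArg Subtype.val h), coatom_sup_eq_top hcg hcfg hne23⟩
  have a31 : G.Adj v3 v1 :=
    ⟨fun h => hne13 (congrArg Subtype.val h).symm, coatom_sup_eq_top hcfg hcf hne13.symm⟩
  -- build the triangle
  set w : G.Walk v1 v1 := .cons a12 (.cons a23 (.cons a31 .nil)) with hw
  have hv12 : v1 ≠ v2 := a12.ne
  have hv23 : v2 ≠ v3 := a23.ne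
  have hv13 : v1 ≠ v3 := fun h => a31.ne h.symm
  have hwc : w.IsCycle := by
    rw [hw]
    rw [SimpleGraph.Walk.isCycle_def]
    refine ⟨?_, ?_, ?_⟩
    · rw [SimpleGraph.Walk.isTrail_def]
      simp only [SimpleGraph.Walk.edges_cons, SimpleGraph.Walk.edges_nil]
      simp [Sym2.eq, Sym2.rel_iff', hv12, hv23, hv13, hv12.symm, hv23.symm, hv13.symm]
    · simp
    · simp only [SimpleGraph.Walk.support_cons, SimpleGraph.Walk.support_nil, List.tail_cons]
      simp [hv12, hv23, hv13, hv12.symm, hv23.symm, hv13.symm]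
  have hwl : w.length = 3 := by simp [hw]
  have hcyc : ¬ G.IsAcyclic := fun h => h w hwc
  have hle : G.egirth ≤ 3 := by
    have := SimpleGraph.le_egirth (G := G) (n := G.egirth) |>.mp le_rfl v1 w hwc
    calc G.egirth ≤ (w.length : ℕ∞) := this
      _ = 3 := by rw [hwl]; rfl
  have hge : (3 : ℕ∞) ≤ G.egirth := SimpleGraph.three_le_egirth
  have : G.egirth = 3 := le_antisymm hle hge
  unfold SimpleGraph.girth
  rw [this]
  rfl
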